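/- Let k₁, k₂ > 0 satisfy k₂³/k₁² > 1/6, suppose r(x) > k₂ on (x', x'') and 0 < r'(x) < k₁ on (x', x*). Then for any x₀ ∈ (x', x*), the Halley iterates converge monotonically increasing to x*. -/

import Mathlib

set_option maxHeartbeats 1000000 in
theorem halley_nonlocal_convergence_increasing_r
    (r f : ℝ → ℝ) (x' x'' xs x₀ k₁ k₂ : ℝ) (x : ℕ → ℝ)
    (hk₁ : 0 < k₁) (hk₂ : 0 < k₂) (hk : k₂ ^ 3 / k₁ ^ 2 > 1 / 6)
    (hr : ContDiff ℝ 1 r)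
    (hf1 : Differentiable ℝ f) (hf2 : Differentiable ℝ (deriv f))
    (hode : ∀ t ∈ Set.Ioo x' x'', deriv (deriv f) t + r t * f t = 0)
    (hnt : ∃ t ∈ Set.Ioo x' x'', f t ≠ 0)
    (hlt : x' < x'')
    (hz' : deriv f x' = 0) (hz'' : deriv f x'' = 0)
    (hcons : ∀ t ∈ Set.Ioo x' x'', deriv f t ≠ 0)
    (hxs : xs ∈ Set.Ioo x' x'') (hfxs : f xs = 0)
    (huniq : ∀ t ∈ Set.Ioo x' x'', f t = 0 → t = xs)
    (hrlow : ∀ t ∈ Set.Ioo x' x'', k₂ < r t)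
    (hrder : ∀ t ∈ Set.Ioo x' xs, 0 < deriv r t ∧ deriv r t < k₁)
    (hx0 : x₀ ∈ Set.Ioo x' xs)
    (hseq0 : x 0 = x₀)
    (hseq : ∀ n, x (n + 1) = x n
      - 2 * (f (x n) / deriv f (x n)) / (2 + r (x n) * (f (x n) / deriv f (x n)) ^ 2)) :
    Monotone x ∧ (∀ n, x n < xs) ∧ Filter.Tendsto x Filter.atTop (nhds xs) := by
  obtain ⟨hx's, hsx''⟩ := hxs
  set F : ℝ → ℝ := fun v => v - 2 * (f v / deriv f v) / (2 + r v * (f v / deriv f v) ^ 2)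
    with hFdef
  have hF_eval : ∀ t, F t = t - 2 * (f t / deriv f t) / (2 + r t * (f t / deriv f t) ^ 2) :=
    fun t => by simp only [hFdef]
  have hstep : ∀ n, x (n + 1) = F (x n) := fun n => by rw [hseq n, hF_eval]
  have hk12 : k₁ ^ 2 < 6 * k₂ ^ 3 := by
    have h6 : (0:ℝ) < 6 := by norm_num
    have hk1sq : (0:ℝ) < k₁ ^ 2 := by positivity
    have := (div_lt_div_iff₀ h6 hk1sq).mp hk
    linarith
  have hD : ∀ u ∈ Set.Ioo x' x'', 0 < 2 + r u * (f u / deriv f u) ^ 2 := by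
    intro u hu
    have h1 : k₂ < r u := hrlow u hu
    nlinarith [sq_nonneg (f u / deriv f u)]
  have hFc : ∀ u ∈ Set.Ioo x' x'', ContinuousAt F u := by
    intro u hu
    have hb := hcons u hu
    have hD' := (hD u hu).ne'
    have c1 : ContinuousAt f u := hf1.continuous.continuousAt
    have c2 : ContinuousAt (deriv f) u := hf2.continuous.continuousAt
    have c3 : ContinuousAt r u := hr.continuous.continuousAt
    have ch : ContinuousAt (fun v => f v / deriv f v) u := c1.div c2 hb
    rw [hFdef]
    exact continuousAt_id.sub ((continuousAt_const.mul ch).div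
      (continuousAt_const.add (c3.mul (ch.pow 2))) hD')
  -- sign dichotomy for deriv f on (x', x'')
  have hsign : (∀ t ∈ Set.Ioo x' x'', 0 < deriv f t) ∨
      (∀ t ∈ Set.Ioo x' x'', deriv f t < 0) := by
    by_contra hcon
    push_neg at hcon
    obtain ⟨⟨aa, haa, ha2⟩, bb, hbb, hb2⟩ := hcon
    have ha3 : deriv f aa < 0 := lt_of_le_of_ne ha2 (hcons aa haa)
    have hb3 : 0 < deriv f bb := lt_of_le_of_ne hb2 (Ne.symm (hcons bb hbb))
    rcases lt_trichotomy aa bb with hab | hab | hab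
    · have hm : (0:ℝ) ∈ Set.Icc (deriv f aa) (deriv f bb) := ⟨ha3.le, hb3.le⟩
      obtain ⟨c, hc, hc0⟩ := intermediate_value_Icc hab.le
        (hf2.continuous.continuousOn) hm
      exact hcons c ⟨lt_of_lt_of_le haa.1 hc.1, lt_of_le_of_lt hc.2 hbb.2⟩ hc0
    · rw [hab] at ha3; linarith
    · have hm : (0:ℝ) ∈ Set.Icc (deriv f aa) (deriv f bb) := ⟨ha3.le, hb3.le⟩
      obtain ⟨c, hc, hc0⟩ := intermediate_value_Icc' hab.le
        (hf2.continuous.continuousOn) hm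
      exact hcons c ⟨lt_of_lt_of_le hbb.1 hc.1, lt_of_le_of_lt hc.2 haa.2⟩ hc0
  -- f t / f' t < 0 on (x', xs)
  have hneg : ∀ t ∈ Set.Ioo x' xs, f t / deriv f t < 0 := by
    intro t ht
    have ht'' : t ∈ Set.Ioo x' x'' := ⟨ht.1, ht.2.trans hsx''⟩
    have hsub : Set.Icc t xs ⊆ Set.Ioo x' x'' :=
      fun u hu => ⟨lt_of_lt_of_le ht.1 hu.1, lt_of_le_of_lt hu.2 hsx''⟩
    rcases hsign with hp | hn
    · have hmono : StrictMonoOn f (Set.Icc t xs) := by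
        apply strictMonoOn_of_deriv_pos (convex_Icc _ _) hf1.continuous.continuousOn
        rw [interior_Icc]
        intro u hu
        exact hp u (hsub ⟨hu.1.le, hu.2.le⟩)
      have hlt' : f t < f xs := hmono ⟨le_rfl, ht.2.le⟩ ⟨ht.2.le, le_rfl⟩ ht.2
      rw [hfxs] at hlt'
      exact div_neg_of_neg_of_pos hlt' (hp t ht'')
    · have hmono : StrictAntiOn f (Set.Icc t xs) := by
        apply strictAntiOn_of_deriv_neg (convex_Icc _ _) hf1.continuous.continuousOn
        rw [interior_Icc]
        intro u hu
        exact hn u (hsub ⟨hu.1.le, hu.2.le⟩)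
      have hlt' : f xs < f t := hmono ⟨le_rfl, ht.2.le⟩ ⟨ht.2.le, le_rfl⟩ ht.2
      rw [hfxs] at hlt'
      exact div_neg_of_pos_of_neg hlt' (hn t ht'')
  -- derivative of F on (x', xs)
  have hderiv : ∀ u ∈ Set.Ioo x' xs, HasDerivAt F
      ((f u / deriv f u) ^ 2 *
        (3 * (r u) ^ 2 * (f u / deriv f u) ^ 2 + 2 * deriv r u * (f u / deriv f u) + 2 * r u)
        / (2 + r u * (f u / deriv f u) ^ 2) ^ 2) u := by
    intro u hu
    have hu'' : u ∈ Set.Ioo x' x'' := ⟨hu.1, hu.2.trans hsx''⟩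
    have hb : deriv f u ≠ 0 := hcons u hu''
    have hDu := (hD u hu'').ne'
    have H1 : HasDerivAt f (deriv f u) u := (hf1 u).hasDerivAt
    have H2 : HasDerivAt (deriv f) (-(r u * f u)) u := by
      have h2' := (hf2 u).hasDerivAt
      have he : deriv (deriv f) u = -(r u * f u) := by
        have := hode u hu''; linarith
      rwa [he] at h2'
    have Hr : HasDerivAt r (deriv r u) u := ((hr.differentiable one_ne_zero) u).hasDerivAt
    have Hh : HasDerivAt (fun v => f v / deriv f v)
        ((deriv f u * deriv f u - f u * -(r u * f u)) / deriv f u ^ 2) u := H1.div H2 hb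
    have Hh' : HasDerivAt (fun v => f v / deriv f v)
        (1 + r u * (f u / deriv f u) ^ 2) u := by
      convert Hh using 1
      field_simp
      ring
    have HF := (hasDerivAt_id' u).sub
      ((Hh'.const_mul 2).div ((Hr.mul (Hh'.pow 2)).const_add 2) hDu)
    rw [hFdef]
    refine HF.congr_deriv ?_
    simp only [Pi.mul_apply, Pi.pow_apply]
    push_cast
    revert hDu
    generalize (f u / deriv f u) = h
    intro hDu
    field_simp
    ring
  -- positivity of the derivative
  have hpos : ∀ u ∈ Set.Ioo x' xs,
      0 < (f u / deriv f u) ^ 2 *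
        (3 * (r u) ^ 2 * (f u / deriv f u) ^ 2 + 2 * deriv r u * (f u / deriv f u) + 2 * r u)
        / (2 + r u * (f u / deriv f u) ^ 2) ^ 2 := by
    intro u hu
    have hu'' : u ∈ Set.Ioo x' x'' := ⟨hu.1, hu.2.trans hsx''⟩
    have hb : deriv f u ≠ 0 := hcons u hu''
    have hf0 : f u ≠ 0 := fun h0 => absurd (huniq u hu'' h0) (ne_of_lt hu.2)
    have hh : f u / deriv f u ≠ 0 := div_ne_zero hf0 hb
    have hr1 : k₂ < r u := hrlow u hu''
    have hrpos : 0 < r u := hk₂.trans hr1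
    obtain ⟨hr2, hr3⟩ := hrder u hu
    have hc3 : k₂ ^ 3 < (r u) ^ 3 := pow_lt_pow_left₀ hr1 hk₂.le (by norm_num)
    have hd2 : (deriv r u) ^ 2 < k₁ ^ 2 := by nlinarith
    have h6 : (deriv r u) ^ 2 < 6 * (r u) ^ 3 := by linarith
    have h3Q : 0 < 3 * (r u) ^ 2 * (3 * (r u) ^ 2 * (f u / deriv f u) ^ 2
        + 2 * deriv r u * (f u / deriv f u) + 2 * r u) := by
      nlinarith [sq_nonneg (3 * (r u) ^ 2 * (f u / deriv f u) + deriv r u)]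
    have hQ : 0 < 3 * (r u) ^ 2 * (f u / deriv f u) ^ 2
        + 2 * deriv r u * (f u / deriv f u) + 2 * r u := by
      nlinarith [h3Q, sq_nonneg (r u)]
    exact div_pos (mul_pos (pow_two_pos_of_ne_zero hh) hQ) (pow_pos (hD u hu'') 2)
  -- one step stays below xs
  have hFxs : F xs = xs := by rw [hF_eval, hfxs]; norm_num
  have hB : ∀ t ∈ Set.Ioo x' xs, F t < xs := by
    intro t ht
    have hsub : Set.Icc t xs ⊆ Set.Ioo x' x'' :=
      fun u hu => ⟨lt_of_lt_of_le ht.1 hu.1, lt_of_le_of_lt hu.2 hsx''⟩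
    have hSM : StrictMonoOn F (Set.Icc t xs) := by
      apply strictMonoOn_of_deriv_pos (convex_Icc _ _)
      · exact fun u hu => (hFc u (hsub hu)).continuousWithinAt
      · rw [interior_Icc]
        intro u hu
        have hu' : u ∈ Set.Ioo x' xs := ⟨ht.1.trans hu.1, hu.2⟩
        rw [(hderiv u hu').deriv]
        exact hpos u hu'
    have := hSM ⟨le_rfl, ht.2.le⟩ ⟨ht.2.le, le_rfl⟩ ht.2
    rwa [hFxs] at this
  -- one step increases
  have hA : ∀ t ∈ Set.Ioo x' xs, t < F t := by
    intro t ht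
    have ht'' : t ∈ Set.Ioo x' x'' := ⟨ht.1, ht.2.trans hsx''⟩
    have h1 := hneg t ht
    have h2 := hD t ht''
    have h3 : 2 * (f t / deriv f t) / (2 + r t * (f t / deriv f t) ^ 2) < 0 :=
      div_neg_of_neg_of_pos (by linarith) h2
    rw [hF_eval]
    linarith
  -- iterates stay in (x', xs)
  have hmem : ∀ n, x n ∈ Set.Ioo x' xs := by
    intro n
    induction n with
    | zero => rw [hseq0]; exact hx0
    | succ n ih =>
      rw [hstep n]
      exact ⟨ih.1.trans (hA _ ih), hB _ ih⟩
  have hmono : Monotone x := by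
    apply monotone_nat_of_le_succ
    intro n
    rw [hstep n]
    exact (hA _ (hmem n)).le
  have hbdd : BddAbove (Set.range x) := ⟨xs, by rintro y ⟨n, rfl⟩; exact (hmem n).2.le⟩
  have hlim : Filter.Tendsto x Filter.atTop (nhds (⨆ n, x n)) :=
    tendsto_atTop_ciSup hmono hbdd
  have hLle : (⨆ n, x n) ≤ xs := ciSup_le fun n => (hmem n).2.le
  have hLge : x 0 ≤ ⨆ n, x n := le_ciSup hbdd 0
  have hx0' : x' < x 0 := by rw [hseq0]; exact hx0.1
  have hLmem : (⨆ n, x n) ∈ Set.Ioo x' x'' :=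
    ⟨lt_of_lt_of_le hx0' hLge, lt_of_le_of_lt hLle hsx''⟩
  have hcL : ContinuousAt F (⨆ n, x n) := hFc _ hLmem
  have h1 : Filter.Tendsto (fun n => x (n + 1)) Filter.atTop (nhds (⨆ n, x n)) :=
    hlim.comp (Filter.tendsto_add_atTop_nat 1)
  have h2 : Filter.Tendsto (fun n => F (x n)) Filter.atTop (nhds (F (⨆ n, x n))) :=
    hcL.tendsto.comp hlim
  have heq : F (⨆ n, x n) = ⨆ n, x n := by
    have h1' : Filter.Tendsto (fun n => F (x n)) Filter.atTop (nhds (⨆ n, x n)) := by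
      simpa only [← hstep] using h1
    exact tendsto_nhds_unique h2 h1'
  have hbL : deriv f (⨆ n, x n) ≠ 0 := hcons _ hLmem
  have hDL := (hD _ hLmem).ne'
  have hzero : f (⨆ n, x n) = 0 := by
    have he := hF_eval (⨆ n, x n)
    rw [heq] at he
    have h0 : 2 * (f (⨆ n, x n) / deriv f (⨆ n, x n))
        / (2 + r (⨆ n, x n) * (f (⨆ n, x n) / deriv f (⨆ n, x n)) ^ 2) = 0 := by linarith
    rcases div_eq_zero_iff.mp h0 with h0' | h0'
    · have : f (⨆ n, x n) / deriv f (⨆ n, x n) = 0 := by linarith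
      rcases div_eq_zero_iff.mp this with h'' | h''
      · exact h''
      · exact absurd h'' hbL
    · exact absurd h0' hDL
  have hLxs : (⨆ n, x n) = xs := huniq _ hLmem hzero
  refine ⟨hmono, fun n => (hmem n).2, ?_⟩
  rw [← hLxs]
  exact hlim
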